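/- Let G be the group with presentation ⟨a, b | w^q a = b w^q⟩ where w = b a⁻¹ b⁻¹ a and q is a negative integer. Then the quotient of G by the normal closure of the element w^{-q} · b is the trivial group. -/

import Mathlib

/-- The relator set of the twist knot group `⟨a, b | wᵠ a = b wᵠ⟩`,
where `a = of true`, `b = of false`, `w = b a⁻¹ b⁻¹ a`. -/
def twistRels (q : ℤ) : Set (FreeGroup Bool) :=
  { (FreeGroup.of false * (FreeGroup.of true)⁻¹ * (FreeGroup.of false)⁻¹ *
      FreeGroup.of true) ^ q * FreeGroup.of true *
    (FreeGroup.of false *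
      (FreeGroup.of false * (FreeGroup.of true)⁻¹ * (FreeGroup.of false)⁻¹ *
        FreeGroup.of true) ^ q)⁻¹ }

theorem stmt_1 (q : ℤ) (hq : q < 0) :
    ∀ x : PresentedGroup (twistRels q) ⧸
      Subgroup.normalClosure
        {((PresentedGroup.of false * (PresentedGroup.of true)⁻¹ *
            (PresentedGroup.of false)⁻¹ * PresentedGroup.of true :
              PresentedGroup (twistRels q)) ^ (-q) * PresentedGroup.of false)},
    x = 1 := by
  set N2 := Subgroup.normalClosure
        {((PresentedGroup.of false * (PresentedGroup.of true)⁻¹ *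
            (PresentedGroup.of false)⁻¹ * PresentedGroup.of true :
              PresentedGroup (twistRels q)) ^ (-q) * PresentedGroup.of false)} with hN2
  intro x
  -- the relator holds in the presented group
  have hrel1 : ((PresentedGroup.of false * (PresentedGroup.of true)⁻¹ *
      (PresentedGroup.of false)⁻¹ * PresentedGroup.of true :
        PresentedGroup (twistRels q)) ^ q * PresentedGroup.of true *
      (PresentedGroup.of false *
        (PresentedGroup.of false * (PresentedGroup.of true)⁻¹ *
          (PresentedGroup.of false)⁻¹ * PresentedGroup.of true) ^ q)⁻¹) = 1 := by
    have hmem : ((FreeGroup.of false * (FreeGroup.of true)⁻¹ * (FreeGroup.of false)⁻¹ *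
        FreeGroup.of true) ^ q * FreeGroup.of true *
      (FreeGroup.of false *
        (FreeGroup.of false * (FreeGroup.of true)⁻¹ * (FreeGroup.of false)⁻¹ *
          FreeGroup.of true) ^ q)⁻¹) ∈ Subgroup.normalClosure (twistRels q) :=
      Subgroup.subset_normalClosure rfl
    have := (QuotientGroup.eq_one_iff (G := FreeGroup Bool)
      (N := Subgroup.normalClosure (twistRels q)) _).mpr hmem
    exact this
  -- in the further quotient
  set φ : PresentedGroup (twistRels q) →*
      PresentedGroup (twistRels q) ⧸ N2 := QuotientGroup.mk' N2 with hφ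
  set A := φ (PresentedGroup.of true) with hA
  set B := φ (PresentedGroup.of false) with hB
  have hrel2 : (B * A⁻¹ * B⁻¹ * A) ^ (-q) * B = 1 := by
    have hmem : ((PresentedGroup.of false * (PresentedGroup.of true)⁻¹ *
            (PresentedGroup.of false)⁻¹ * PresentedGroup.of true :
              PresentedGroup (twistRels q)) ^ (-q) * PresentedGroup.of false) ∈ N2 :=
      Subgroup.subset_normalClosure rfl
    have := (QuotientGroup.eq_one_iff _).mpr hmem
    exact this
  have hrel1' : (B * A⁻¹ * B⁻¹ * A) ^ q * A * (B * (B * A⁻¹ * B⁻¹ * A) ^ q)⁻¹ = 1 := by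
    have := congrArg φ hrel1
    exact this
  set W := B * A⁻¹ * B⁻¹ * A with hW
  have hBW : B = W ^ q := by
    have : (W ^ q)⁻¹ * B = 1 := by exact (congrArg (· * B) (zpow_neg W q)).symm.trans hrel2
    exact (inv_mul_eq_one.mp this).symm
  have hAW : A = W ^ q := by
    have h1 : W ^ q * A = B * W ^ q := by
      have := hrel1'
      rw [mul_inv_eq_one] at this
      exact this
    rw [hBW] at h1
    exact mul_left_cancel h1
  have hAB : A = B := hAW.trans hBW.symm
  have hW1 : W = 1 := by rw [hW, hAB]; group
  have hB1 : B = 1 := by rw [hBW, hW1, one_zpow]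
  have hA1 : A = 1 := hAB.trans hB1
  -- now every element is 1
  obtain ⟨y, rfl⟩ := QuotientGroup.mk'_surjective N2 x
  obtain ⟨f, rfl⟩ := QuotientGroup.mk'_surjective (Subgroup.normalClosure (twistRels q)) y
  have key : ∀ g : FreeGroup Bool,
      φ ((QuotientGroup.mk' (Subgroup.normalClosure (twistRels q))) g) = 1 := by
    intro g
    induction g using FreeGroup.induction_on with
    | C1 => exact map_one φ
    | of b =>
      cases b
      · exact hB1
      · exact hA1
    | inv_of b ih => exact (map_inv φ _).trans ((congrArg (·⁻¹) ih).trans inv_one)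
    | mul g h ihg ihh => exact (map_mul φ _ _).trans ((congrArg₂ (· * ·) ihg ihh).trans (one_mul 1))
  exact key f
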